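/- Let $X$ be a metric space with bounded geometry and let $\phi: C^*_u(X)^n \to \mathcal{B}(\ell^2(X))$ be a bounded $n$-multilinear map that is $\ell^\infty(X)$-multimodular. If $a_1, \dots, a_n \in \mathcal{B}(\ell^2(X))$ each have propagation at most $r$, then $\phi(a_1, \dots, a_n)$ has propagation at most $n \cdot r$. -/

import Mathlib

/- Common setup: `ℓ²(X)`, matrix entries, propagation, approximation,
and the uniform Roe algebra as a set of bounded operators. -/

noncomputable section
open scoped InnerProductSpace
open Function

/-- `ℓ²(X)` with complex coefficients. -/
abbrev H2 (X : Type*) := lp (fun _ : X => ℂ) 2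

/-- The canonical basis vector `δ_x` of `ℓ²(X)`. -/
def deltaV (X : Type*) (x : X) : H2 X :=
  haveI := Classical.decEq X
  lp.single 2 x 1

/-- The matrix entry `a_{xy} = ⟪δ_x, a δ_y⟫` of a bounded operator on `ℓ²(X)`. -/
def entry {X : Type*} (a : H2 X →L[ℂ] H2 X) (x y : X) : ℂ :=
  ⟪deltaV X x, a (deltaV X y)⟫_ℂ

/-- `a` has propagation at most `r`. -/
def HasPropLE {X : Type*} [MetricSpace X] (a : H2 X →L[ℂ] H2 X) (r : ℝ) : Prop :=
  ∀ x y : X, dist x y > r → entry a x y = 0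

/-- `a` can be `ε`-`r`-approximated: there is `b` of propagation at most `r`
with `‖a - b‖ ≤ ε`. -/
def IsApprox {X : Type*} [MetricSpace X] (a : H2 X →L[ℂ] H2 X) (ε r : ℝ) : Prop :=
  ∃ b : H2 X →L[ℂ] H2 X, HasPropLE b r ∧ ‖a - b‖ ≤ ε

/-- The uniform Roe algebra of `X`, as the norm closure of the finite
propagation operators in `B(ℓ²(X))`. -/
def roeSet (X : Type*) [MetricSpace X] : Set (H2 X →L[ℂ] H2 X) :=
  closure {a | ∃ r : ℝ, HasPropLE a r}

/-- A bounded operator on `ℓ²(X)` is diagonal precisely when it is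
multiplication by a function in `ℓ^∞(X)`. -/
def IsDiagonalOp {X : Type*} (d : H2 X →L[ℂ] H2 X) : Prop :=
  ∀ x y : X, x ≠ y → entry d x y = 0

/-- `X` has bounded geometry: the cardinalities of `r`-balls are uniformly
finite for each `r`. -/
def BoundedGeometry (X : Type*) [MetricSpace X] : Prop :=
  ∀ r : ℝ, ∃ N : ℕ, ∀ x : X,
    (Metric.closedBall x r).Finite ∧ (Metric.closedBall x r).ncard ≤ N

/-- `φ` is `ℓ^∞(X)`-multimodular (on the uniform Roe algebra): for every
diagonal operator `d` (i.e. every multiplication operator by a function in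
`ℓ^∞(X)`), `d` can be moved in and out of `φ` and across adjacent arguments. -/
def IsLinftyMultimodular {X : Type*} [MetricSpace X] (n : ℕ)
    (φ : (Fin (n + 1) → (H2 X →L[ℂ] H2 X)) → (H2 X →L[ℂ] H2 X)) : Prop :=
  ∀ d : H2 X →L[ℂ] H2 X, IsDiagonalOp d →
    ∀ a : Fin (n + 1) → (H2 X →L[ℂ] H2 X), (∀ i, a i ∈ roeSet X) →
      (d * φ a = φ (Function.update a 0 (d * a 0)))
      ∧ (∀ (j : Fin (n + 1)) (h : (j : ℕ) + 1 < n + 1),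
          φ (Function.update a j (a j * d))
            = φ (Function.update a ⟨(j : ℕ) + 1, h⟩ (d * a ⟨(j : ℕ) + 1, h⟩)))
      ∧ (φ (Function.update a (Fin.last n) (a (Fin.last n) * d)) = φ a * d)

/-- `φ` is a bounded multilinear map on the uniform Roe algebra. -/
def IsBddMultilinearOnRoe {X : Type*} [MetricSpace X] (n : ℕ)
    (φ : (Fin n → (H2 X →L[ℂ] H2 X)) → (H2 X →L[ℂ] H2 X)) : Prop :=
  (∃ C : ℝ, ∀ a : Fin n → (H2 X →L[ℂ] H2 X), (∀ i, a i ∈ roeSet X) →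
      ‖φ a‖ ≤ C * ∏ i, ‖a i‖)
  ∧ (∀ (a : Fin n → (H2 X →L[ℂ] H2 X)), (∀ i, a i ∈ roeSet X) →
      ∀ (i : Fin n), ∀ x y : H2 X →L[ℂ] H2 X, x ∈ roeSet X → y ∈ roeSet X →
        φ (Function.update a i (x + y))
          = φ (Function.update a i x) + φ (Function.update a i y))
  ∧ (∀ (a : Fin n → (H2 X →L[ℂ] H2 X)), (∀ i, a i ∈ roeSet X) →
      ∀ (i : Fin n), ∀ (c : ℂ) (x : H2 X →L[ℂ] H2 X), x ∈ roeSet X →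
        φ (Function.update a i (c • x)) = c • φ (Function.update a i x))

namespace MMaux

variable {X : Type*}

lemma deltaV_apply_self (x : X) : (deltaV X x : ∀ _ : X, ℂ) x = 1 := by
  unfold deltaV; exact @lp.single_apply_self X (fun _ : X => ℂ) _ (Classical.decEq X) 2 x 1

lemma deltaV_apply_ne {x j : X} (h : j ≠ x) : (deltaV X x : ∀ _ : X, ℂ) j = 0 := by
  unfold deltaV; exact @lp.single_apply_ne X (fun _ : X => ℂ) _ (Classical.decEq X) 2 x 1 j h

lemma entry_eq_apply (a : H2 X →L[ℂ] H2 X) (x y : X) :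
    entry a x y = (a (deltaV X y)) x := by
  classical
  rw [entry, deltaV]
  rw [lp.inner_single_left]
  simp

lemma ext_of_entry {a b : H2 X →L[ℂ] H2 X}
    (h : ∀ x y, entry a x y = entry b x y) : a = b := by
  classical
  have hd : ∀ y, a (deltaV X y) = b (deltaV X y) := fun y =>
    lp.ext (funext fun x => by
      have := h x y
      rwa [entry_eq_apply, entry_eq_apply] at this)
  apply ContinuousLinearMap.ext
  intro f
  have hs : HasSum (fun i : X => lp.single 2 i (f i : ℂ)) f :=
    lp.hasSum_single (by norm_num) f
  have hsingle : ∀ i : X, lp.single 2 i (f i : ℂ) = (f i : ℂ) • deltaV X i := by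
    intro i
    apply lp.ext
    funext j
    rcases eq_or_ne j i with hj | hj
    · subst hj
      simp [lp.single_apply_self, deltaV_apply_self]
    · simp [lp.single_apply_ne _ _ _ hj, deltaV_apply_ne hj, Pi.single_apply, hj]
  have ha : HasSum (fun i : X => (f i : ℂ) • a (deltaV X i)) (a f) := by
    have := hs.mapL a
    simpa [hsingle] using this
  have hb : HasSum (fun i : X => (f i : ℂ) • a (deltaV X i)) (b f) := by
    have := hs.mapL b
    simp only [hsingle] at this
    simpa [hd] using this
  exact ha.unique hb

lemma memℓp_ind (S : Set X) (f : H2 X) : Memℓp (S.indicator f) 2 := by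
  apply memℓp_gen
  have hsum := (lp.memℓp f).summable (p := 2) (by norm_num)
  refine hsum.of_nonneg_of_le (fun i => ?_) (fun i => ?_)
  · positivity
  · have hle : ‖S.indicator (⇑f) i‖ ≤ ‖f i‖ := by
      by_cases h : i ∈ S
      · simp [Set.indicator_of_mem h]
      · simp [Set.indicator_of_notMem h]
    exact Real.rpow_le_rpow (norm_nonneg _) hle (by norm_num)

lemma norm_ind_le (S : Set X) (f : H2 X) :
    ‖(⟨S.indicator f, memℓp_ind S f⟩ : H2 X)‖ ≤ ‖f‖ := by
  have h2 : 0 < (2 : ENNReal).toReal := by norm_num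
  apply lp.norm_le_of_tsum_le h2 (norm_nonneg f)
  rw [lp.norm_rpow_eq_tsum h2 f]
  refine Summable.tsum_le_tsum (fun i => ?_) ((memℓp_ind S f).summable h2) ((lp.memℓp f).summable h2)
  have hle : ‖S.indicator (⇑f) i‖ ≤ ‖f i‖ := by
    by_cases h : i ∈ S
    · simp [Set.indicator_of_mem h]
    · simp [Set.indicator_of_notMem h]
  exact Real.rpow_le_rpow (norm_nonneg _) hle (by norm_num)

/-- Multiplication by the indicator function of `S`, as a bounded operator. -/
def indOp (S : Set X) : H2 X →L[ℂ] H2 X :=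
  LinearMap.mkContinuous
    { toFun := fun f => (⟨S.indicator f, memℓp_ind S f⟩ : H2 X)
      map_add' := fun f g => by
        apply lp.ext
        funext j
        by_cases h : j ∈ S <;>
          simp [Set.indicator_of_mem, Set.indicator_of_notMem, h, Pi.add_apply] <;>
          exact congrFun (Set.indicator_add S _ _) j
      map_smul' := fun c f => by
        apply lp.ext
        funext j
        by_cases h : j ∈ S <;>
          simp [Set.indicator_of_mem, Set.indicator_of_notMem, h] }
    1 (fun f => by simpa using norm_ind_le S f)

lemma indOp_apply (S : Set X) (f : H2 X) (j : X) :
    (indOp S f : ∀ _ : X, ℂ) j = S.indicator f j := rfl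

lemma indOp_deltaV_of_mem {S : Set X} {v : X} (hv : v ∈ S) :
    indOp S (deltaV X v) = deltaV X v := by
  apply lp.ext
  funext j
  rw [indOp_apply]
  by_cases h : j ∈ S
  · rw [Set.indicator_of_mem h]
  · rw [Set.indicator_of_notMem h]
    exact (deltaV_apply_ne (fun hj => h (by rw [hj]; exact hv))).symm

lemma indOp_deltaV_of_not_mem {S : Set X} {v : X} (hv : v ∉ S) :
    indOp S (deltaV X v) = 0 := by
  apply lp.ext
  funext j
  rw [indOp_apply]
  by_cases h : j ∈ S
  · rw [Set.indicator_of_mem h]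
    simpa using deltaV_apply_ne (fun hj => hv (by rw [← hj]; exact h))
  · rw [Set.indicator_of_notMem h]
    simp

lemma entry_indOp_mul_of_mem (S : Set X) (b : H2 X →L[ℂ] H2 X) {u : X} (hu : u ∈ S) (v : X) :
    entry (indOp S * b) u v = entry b u v := by
  rw [entry_eq_apply, entry_eq_apply, ContinuousLinearMap.mul_apply, indOp_apply,
    Set.indicator_of_mem hu]

lemma entry_indOp_mul_of_not_mem (S : Set X) (b : H2 X →L[ℂ] H2 X) {u : X} (hu : u ∉ S)
    (v : X) : entry (indOp S * b) u v = 0 := by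
  rw [entry_eq_apply, ContinuousLinearMap.mul_apply, indOp_apply, Set.indicator_of_notMem hu]

lemma entry_mul_indOp_of_mem (b : H2 X →L[ℂ] H2 X) {S : Set X} {v : X} (hv : v ∈ S) (u : X) :
    entry (b * indOp S) u v = entry b u v := by
  rw [entry_eq_apply, entry_eq_apply, ContinuousLinearMap.mul_apply, indOp_deltaV_of_mem hv]

lemma entry_mul_indOp_of_not_mem (b : H2 X →L[ℂ] H2 X) {S : Set X} {v : X} (hv : v ∉ S)
    (u : X) : entry (b * indOp S) u v = 0 := by
  rw [entry_eq_apply, ContinuousLinearMap.mul_apply, indOp_deltaV_of_not_mem hv]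
  simp

lemma isDiagonalOp_indOp (S : Set X) : IsDiagonalOp (indOp S) := by
  intro u v huv
  rw [entry_eq_apply, indOp_apply]
  by_cases h : u ∈ S
  · rw [Set.indicator_of_mem h]
    exact deltaV_apply_ne huv
  · exact Set.indicator_of_notMem h _

variable [MetricSpace X]

lemma hasPropLE_indOp_mul (S : Set X) {b : H2 X →L[ℂ] H2 X} {r : ℝ} (hb : HasPropLE b r) :
    HasPropLE (indOp S * b) r := by
  intro u v huv
  by_cases h : u ∈ S
  · rw [entry_indOp_mul_of_mem S b h v]
    exact hb u v huv
  · exact entry_indOp_mul_of_not_mem S b h v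

lemma absorb {r : ℝ} {S T : Set X} {b : H2 X →L[ℂ] H2 X}
    (hb : HasPropLE b r)
    (hST : ∀ u v : X, u ∈ S → dist u v ≤ r → v ∈ T) :
    (indOp S * b) * indOp T = indOp S * b := by
  apply ext_of_entry
  intro u v
  by_cases hv : v ∈ T
  · rw [entry_mul_indOp_of_mem _ hv]
  · rw [entry_mul_indOp_of_not_mem _ hv]
    by_cases hu : u ∈ S
    · rw [entry_indOp_mul_of_mem S b hu]
      refine (hb u v ?_).symm
      by_contra hle
      push_neg at hle
      exact hv (hST u v hu hle)
    · exact (entry_indOp_mul_of_not_mem S b hu v).symm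

end MMaux

/-- If `φ` is a bounded multilinear `ℓ^∞(X)`-multimodular map on the uniform
Roe algebra of a bounded geometry space `X`, taking values in `B(ℓ²(X))`, and
each of the `n` operators `a i` has propagation at most `r`, then `φ a` has
propagation at most `n * r`. -/
theorem multimodular_propagation_bound
    {X : Type*} [MetricSpace X] (hX : BoundedGeometry X) (n : ℕ)
    (φ : (Fin (n + 1) → (H2 X →L[ℂ] H2 X)) → (H2 X →L[ℂ] H2 X))
    (hφ : IsBddMultilinearOnRoe (n + 1) φ)
    (hmod : IsLinftyMultimodular n φ)
    (r : ℝ) (hr : 0 ≤ r)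
    (a : Fin (n + 1) → (H2 X →L[ℂ] H2 X)) (ha : ∀ i, HasPropLE (a i) r) :
    HasPropLE (φ a) ((n + 1) * r) := by
  classical
  intro x y hxy
  set B : ℕ → Set X := fun k => Metric.closedBall x (k * r) with hB
  set A : ℕ → Fin (n + 1) → (H2 X →L[ℂ] H2 X) := fun j i =>
    if (i : ℕ) ≤ j then MMaux.indOp (B (i : ℕ)) * a i else a i with hA
  have hApropLE : ∀ (j : ℕ) (i : Fin (n + 1)), HasPropLE (A j i) r := by
    intro j i
    simp only [hA]
    split
    · exact MMaux.hasPropLE_indOp_mul _ (ha i)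
    · exact ha i
  have hAmem : ∀ (j : ℕ) (i : Fin (n + 1)), A j i ∈ roeSet X :=
    fun j i => subset_closure ⟨r, hApropLE j i⟩
  have hamem : ∀ i, a i ∈ roeSet X := fun i => subset_closure ⟨r, ha i⟩
  have hBstep : ∀ (k : ℕ) (u v : X), u ∈ B k → dist u v ≤ r → v ∈ B (k + 1) := by
    intro k u v hu huv
    simp only [hB, Metric.mem_closedBall] at hu ⊢
    push_cast
    calc dist v x ≤ dist v u + dist u x := dist_triangle v u x
    _ ≤ r + (k : ℝ) * r := add_le_add (by rwa [dist_comm]) hu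
    _ = ((k : ℝ) + 1) * r := by ring
  have habs : ∀ (j : ℕ) (i : Fin (n + 1)), (i : ℕ) ≤ j →
      A j i * MMaux.indOp (B ((i : ℕ) + 1)) = A j i := by
    intro j i hij
    simp only [hA, if_pos hij]
    exact MMaux.absorb (ha i) (hBstep (i : ℕ))
  have base : MMaux.indOp (B 0) * φ a = φ (A 0) := by
    have h1 := (hmod (MMaux.indOp (B 0)) (MMaux.isDiagonalOp_indOp _) a hamem).1
    rw [h1]
    congr 1
    funext i
    rw [Function.update_apply]
    simp only [hA]
    by_cases h0 : i = 0
    · subst h0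
      simp
    · have hiv : (i : ℕ) ≠ 0 := fun h => h0 (Fin.ext h)
      rw [if_neg h0, if_neg (by omega)]
  have step : ∀ j : ℕ, j < n → φ (A j) = φ (A (j + 1)) := by
    intro j hj
    have hjn : j < n + 1 := by omega
    have h2 := (hmod (MMaux.indOp (B (j + 1))) (MMaux.isDiagonalOp_indOp _)
      (A j) (hAmem j)).2.1 ⟨j, hjn⟩ (Nat.succ_lt_succ hj)
    have e1 : Function.update (A j) ⟨j, hjn⟩
        (A j ⟨j, hjn⟩ * MMaux.indOp (B (j + 1))) = A j := by
      rw [habs j ⟨j, hjn⟩ le_rfl, Function.update_eq_self]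
    have e2 : Function.update (A j) ⟨j + 1, Nat.succ_lt_succ hj⟩
        (MMaux.indOp (B (j + 1)) * A j ⟨j + 1, Nat.succ_lt_succ hj⟩) = A (j + 1) := by
      funext i
      rw [Function.update_apply]
      by_cases hi : i = ⟨j + 1, Nat.succ_lt_succ hj⟩
      · subst hi
        rw [if_pos rfl]
        simp only [hA]
        rw [if_neg (by omega : ¬ (j + 1 ≤ j)), if_pos (le_refl (j + 1))]
      · have hiv : (i : ℕ) ≠ j + 1 := fun h => hi (Fin.ext h)
        rw [if_neg hi]
        simp only [hA]
        by_cases hle : (i : ℕ) ≤ j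
        · rw [if_pos hle, if_pos (by omega)]
        · rw [if_neg hle, if_neg (by omega)]
    rw [← e1, h2, e2]
  have main : ∀ j : ℕ, j ≤ n → MMaux.indOp (B 0) * φ a = φ (A j) := by
    intro j
    induction j with
    | zero => intro _; exact base
    | succ k ih => intro hk; rw [ih (by omega), step k (by omega)]
  have hlast := (hmod (MMaux.indOp (B (n + 1))) (MMaux.isDiagonalOp_indOp _)
    (A n) (hAmem n)).2.2
  have e3 : Function.update (A n) (Fin.last n)
      (A n (Fin.last n) * MMaux.indOp (B (n + 1))) = A n := by
    have := habs n (Fin.last n) (by simp [Fin.last])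
    simp only [Fin.val_last] at this
    rw [this, Function.update_eq_self]
  rw [e3] at hlast
  have key : MMaux.indOp (B 0) * φ a
      = (MMaux.indOp (B 0) * φ a) * MMaux.indOp (B (n + 1)) := by
    rw [main n le_rfl, ← hlast, ← main n le_rfl]
  have hx0 : x ∈ B 0 := by simp [hB]
  have hy : y ∉ B (n + 1) := by
    simp only [hB, Metric.mem_closedBall]
    push_cast
    intro h
    rw [dist_comm] at h
    change dist x y > ((n : ℝ) + 1) * r at hxy
    linarith
  calc entry (φ a) x y
      = entry (MMaux.indOp (B 0) * φ a) x y :=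
        (MMaux.entry_indOp_mul_of_mem _ _ hx0 y).symm
    _ = entry ((MMaux.indOp (B 0) * φ a) * MMaux.indOp (B (n + 1))) x y := by rw [← key]
    _ = 0 := MMaux.entry_mul_indOp_of_not_mem _ hy x
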